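/- For integers m ≥ 0, n ∈ ℤ, and γ = (a b; c d) ∈ SL(2,ℂ): ∂_z^m((cz+d)^{-n} f((az+b)/(cz+d))) = ∑_{r=0}^{m} (m!/r!) · C(m+n−1, m−r) · (−c)^{m−r} · (cz+d)^{-(n+m+r)} · f^{(r)}((az+b)/(cz+d)), where C(·,·) is the (generalized) binomial coefficient. -/

import Mathlib

/-- The homographic action of `γ = (a b; c d) ∈ SL(2,ℂ)`: `z ↦ (az+b)/(cz+d)`. -/
noncomputable def mact (γ : Matrix.SpecialLinearGroup (Fin 2) ℂ) (z : ℂ) : ℂ :=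
  (γ.1 0 0 * z + γ.1 0 1) / (γ.1 1 0 * z + γ.1 1 1)

/-- The automorphy factor `cz + d` for `γ = (a b; c d) ∈ SL(2,ℂ)`. -/
noncomputable def mden (γ : Matrix.SpecialLinearGroup (Fin 2) ℂ) (z : ℂ) : ℂ :=
  γ.1 1 0 * z + γ.1 1 1

/-- The generalized binomial coefficient `C(x, r) = x(x-1)⋯(x-r+1)/r!` for `x : ℂ`. -/
noncomputable def gchoose (x : ℂ) (r : ℕ) : ℂ :=
  (∏ i ∈ Finset.range r, (x - i)) / (r.factorial : ℂ)

lemma gchoose_zero (x : ℂ) : gchoose x 0 = 1 := by simp [gchoose]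

lemma cast_add_one_ne (k : ℕ) : ((k:ℂ)+1) ≠ 0 := by
  have := Nat.cast_add_one_ne_zero (R := ℂ) k
  exact_mod_cast this

lemma gchoose_succ (y : ℂ) (k : ℕ) : gchoose y (k+1) = gchoose y k * (y - k) / (k+1) := by
  simp only [gchoose, Finset.prod_range_succ, Nat.factorial_succ]
  rw [div_mul_eq_mul_div, div_div]
  congr 1
  push_cast
  ring

lemma gchoose_succ' (y : ℂ) (k : ℕ) : gchoose (y+1) (k+1) = (y+1) * gchoose y k / (k+1) := by
  have hprod : ∏ i ∈ Finset.range (k+1), (y + 1 - (i:ℂ)) = (y+1) * ∏ i ∈ Finset.range k, (y - i) := by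
    rw [Finset.prod_range_succ']
    have h : ∀ i ∈ Finset.range k, (y + 1 - (((i:ℕ)+1 : ℕ) : ℂ)) = y - i := by
      intro i _; push_cast; ring
    rw [Finset.prod_congr rfl h]
    push_cast; ring
  simp only [gchoose, hprod, Nat.factorial_succ]
  rw [mul_div_assoc, mul_div_assoc, div_div]
  congr 2
  push_cast
  ring

lemma gchoose_key (y : ℂ) (k r : ℕ) :
    ((k:ℂ) + (r:ℂ) + 1) * gchoose (y+1) (k+1) = (y + (r:ℂ) + 1) * gchoose y k + (r:ℂ) * gchoose y (k+1) := by
  rw [gchoose_succ' y k, gchoose_succ y k]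
  have hk1 : ((k:ℂ)+1) ≠ 0 := cast_add_one_ne k
  field_simp
  ring

noncomputable def Acoef (n : ℤ) (c : ℂ) (m r : ℕ) : ℂ :=
  ((m.factorial : ℂ) / (r.factorial : ℂ)) * gchoose ((m : ℂ) + (n : ℂ) - 1) (m - r) * (-c) ^ (m - r)

lemma Acoef_self (n : ℤ) (c : ℂ) (m : ℕ) : Acoef n c m m = 1 := by
  simp [Acoef, gchoose_zero, div_self (Nat.cast_ne_zero.2 m.factorial_ne_zero : (m.factorial:ℂ) ≠ 0)]

lemma Acoef_rec (n : ℤ) (c : ℂ) (m r : ℕ) (hr : r ≤ m) :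
    Acoef n c (m+1) r = Acoef n c m r * (-c) * ((n:ℂ) + (m:ℂ) + (r:ℂ))
      + (r:ℂ) * ((m.factorial:ℂ)/(r.factorial:ℂ)) * gchoose ((m:ℂ)+(n:ℂ)-1) (m-r+1) * (-c)^(m-r+1) := by
  have hk2 : m + 1 - r = (m - r) + 1 := by omega
  have hkc : ((m - r : ℕ) : ℂ) = (m:ℂ) - (r:ℂ) := by
    push_cast [Nat.cast_sub hr]; ring
  have hfac : (((m+1).factorial : ℕ) : ℂ) = ((m:ℂ)+1) * (m.factorial:ℂ) := by
    rw [Nat.factorial_succ]; push_cast; ring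
  have hy : ((m+1 : ℕ):ℂ) + (n:ℂ) - 1 = ((m:ℂ)+(n:ℂ)-1)+1 := by push_cast; ring
  have key := gchoose_key ((m:ℂ)+(n:ℂ)-1) (m - r) r
  rw [hkc] at key
  simp only [Acoef, hk2, hfac, hy]
  linear_combination ((m.factorial:ℂ)/(r.factorial:ℂ)) * (-c)^(m-r+1) * key

lemma sum_step (n : ℤ) (c u : ℂ) (hu : u ≠ 0) (m : ℕ) (F : ℕ → ℂ) :
    (∑ r ∈ Finset.range (m+1),
      (Acoef n c m r * ((((-(n + (m:ℤ) + (r:ℤ))) : ℤ) : ℂ) * u ^ ((-(n + (m:ℤ) + (r:ℤ))) - 1) * c) * F r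
        + Acoef n c m r * u ^ (-(n + (m:ℤ) + (r:ℤ))) * (F (r+1) * u ^ (-2 : ℤ))))
    = ∑ r ∈ Finset.range (m+2), Acoef n c (m+1) r * u ^ (-(n + (m:ℤ) + 1 + (r:ℤ))) * F r := by
  set P : ℕ → ℂ := fun r => (Acoef n c m r * (-c) * ((n:ℂ)+(m:ℂ)+(r:ℂ))) * u ^ (-(n + (m:ℤ) + 1 + (r:ℤ))) * F r with hP
  set Q : ℕ → ℂ := fun r => Acoef n c m r * u ^ (-(n + (m:ℤ) + 1 + ((r:ℤ)+1))) * F (r+1) with hQ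
  have hsplit : ∀ r,
      (Acoef n c m r * ((((-(n + (m:ℤ) + (r:ℤ))) : ℤ) : ℂ) * u ^ ((-(n + (m:ℤ) + (r:ℤ))) - 1) * c) * F r
        + Acoef n c m r * u ^ (-(n + (m:ℤ) + (r:ℤ))) * (F (r+1) * u ^ (-2 : ℤ))) = P r + Q r := by
    intro r
    have e1 : (-(n + (m:ℤ) + (r:ℤ))) - 1 = -(n + (m:ℤ) + 1 + (r:ℤ)) := by ring
    have e2 : u ^ (-(n + (m:ℤ) + (r:ℤ))) * u ^ (-2 : ℤ) = u ^ (-(n + (m:ℤ) + 1 + ((r:ℤ)+1))) := by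
      rw [← zpow_add₀ hu]; congr 1; ring
    rw [e1]
    simp only [hP, hQ]
    push_cast
    linear_combination (Acoef n c m r * F (r+1)) * e2
  rw [Finset.sum_congr rfl (fun r _ => hsplit r), Finset.sum_add_distrib]
  have hT0 : Acoef n c (m+1) 0 * u ^ (-(n + (m:ℤ) + 1 + ((0:ℕ):ℤ))) * F 0 = P 0 := by
    rw [Acoef_rec n c m 0 (Nat.zero_le m)]
    simp only [hP]
    push_cast
    ring
  have hTtop : Acoef n c (m+1) (m+1) * u ^ (-(n + (m:ℤ) + 1 + ((m+1:ℕ):ℤ))) * F (m+1) = Q m := by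
    simp only [hQ, Acoef_self]
    push_cast
    ring
  have hTmid : ∀ i, i < m → Acoef n c (m+1) (i+1) * u ^ (-(n + (m:ℤ) + 1 + ((i+1:ℕ):ℤ))) * F (i+1)
      = P (i+1) + Q i := by
    intro i hi
    have h3 : m - (i+1) + 1 = m - i := by omega
    have hfac : (((i+1).factorial : ℕ) : ℂ) = ((i:ℂ)+1) * (i.factorial:ℂ) := by
      rw [Nat.factorial_succ]; push_cast; ring
    have hi1 : ((i:ℂ)+1) ≠ 0 := cast_add_one_ne i
    have hif : ((i.factorial:ℕ):ℂ) ≠ 0 := Nat.cast_ne_zero.2 i.factorial_ne_zero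
    rw [Acoef_rec n c m (i+1) (by omega)]
    simp only [hP, hQ, h3, Acoef, hfac]
    push_cast
    field_simp
  rw [Finset.sum_range_succ (fun r => Acoef n c (m+1) r * u ^ (-(n + (m:ℤ) + 1 + (r:ℤ))) * F r) (m+1),
      Finset.sum_range_succ' (fun r => Acoef n c (m+1) r * u ^ (-(n + (m:ℤ) + 1 + (r:ℤ))) * F r) m,
      Finset.sum_range_succ' P m, Finset.sum_range_succ Q m]
  rw [Finset.sum_congr rfl (fun i hi => hTmid i (Finset.mem_range.1 hi)), hT0, hTtop,
      Finset.sum_add_distrib]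
  ring

lemma main_formula (γ : Matrix.SpecialLinearGroup (Fin 2) ℂ) (f : ℂ → ℂ)
    (hf : Differentiable ℂ f) (n : ℤ) :
    ∀ m, ∀ z, mden γ z ≠ 0 →
      iteratedDeriv m (fun w => (mden γ w) ^ (-n) * f (mact γ w)) z
        = ∑ r ∈ Finset.range (m+1),
            Acoef n (γ.1 1 0) m r * mden γ z ^ (-(n + (m:ℤ) + (r:ℤ))) * iteratedDeriv r f (mact γ z) := by
  have hD : ∀ r : ℕ, Differentiable ℂ (iteratedDeriv r f) := by
    intro r
    exact (hf.contDiff (n := ⊤)).differentiable_iteratedDeriv r (by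
      exact_mod_cast WithTop.coe_lt_top _)
  have hdet : γ.1 0 0 * γ.1 1 1 - γ.1 0 1 * γ.1 1 0 = 1 := by
    have h := γ.2
    rw [Matrix.det_fin_two] at h
    exact h
  have hcont : Continuous (mden γ) := by
    unfold mden; fun_prop
  have hopen : IsOpen {w : ℂ | mden γ w ≠ 0} := isOpen_ne.preimage hcont
  have hmden_d : ∀ w : ℂ, HasDerivAt (fun w : ℂ => γ.1 1 0 * w + γ.1 1 1) (γ.1 1 0) w := by
    intro w
    simpa using ((hasDerivAt_id w).const_mul (γ.1 1 0)).add_const (γ.1 1 1)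
  have hmact : ∀ w : ℂ, mden γ w ≠ 0 → HasDerivAt (mact γ) (mden γ w ^ (-2 : ℤ)) w := by
    intro w hw
    have h1 : HasDerivAt (fun w : ℂ => γ.1 0 0 * w + γ.1 0 1) (γ.1 0 0) w := by
      simpa using ((hasDerivAt_id w).const_mul (γ.1 0 0)).add_const (γ.1 0 1)
    have h3 := h1.div (hmden_d w) hw
    have hnum : γ.1 0 0 * (γ.1 1 0 * w + γ.1 1 1) - (γ.1 0 0 * w + γ.1 0 1) * γ.1 1 0 = 1 := by
      linear_combination hdet
    have heq : (γ.1 0 0 * (γ.1 1 0 * w + γ.1 1 1) - (γ.1 0 0 * w + γ.1 0 1) * γ.1 1 0) /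
        (γ.1 1 0 * w + γ.1 1 1) ^ 2 = mden γ w ^ (-2 : ℤ) := by
      rw [hnum, zpow_neg, one_div]
      congr 1
    rw [heq] at h3
    exact h3
  intro m
  induction m with
  | zero =>
    intro z hz
    simp [iteratedDeriv_zero, Acoef_self]
  | succ m ih =>
    intro z hz
    rw [iteratedDeriv_succ]
    have hev : iteratedDeriv m (fun w => (mden γ w) ^ (-n) * f (mact γ w))
        =ᶠ[nhds z] (fun w => ∑ r ∈ Finset.range (m+1),
            Acoef n (γ.1 1 0) m r * mden γ w ^ (-(n + (m:ℤ) + (r:ℤ))) * iteratedDeriv r f (mact γ w)) := by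
      filter_upwards [hopen.mem_nhds hz] with w hw using ih w hw
    rw [hev.deriv_eq]
    have hder : HasDerivAt (fun w => ∑ r ∈ Finset.range (m+1),
        Acoef n (γ.1 1 0) m r * mden γ w ^ (-(n + (m:ℤ) + (r:ℤ))) * iteratedDeriv r f (mact γ w))
        (∑ r ∈ Finset.range (m+1),
          (Acoef n (γ.1 1 0) m r * ((((-(n + (m:ℤ) + (r:ℤ))) : ℤ) : ℂ) * mden γ z ^ ((-(n + (m:ℤ) + (r:ℤ))) - 1) * γ.1 1 0) * iteratedDeriv r f (mact γ z)
            + Acoef n (γ.1 1 0) m r * mden γ z ^ (-(n + (m:ℤ) + (r:ℤ))) * (iteratedDeriv (r+1) f (mact γ z) * mden γ z ^ (-2 : ℤ)))) z := by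
      apply HasDerivAt.fun_sum
      intro r _
      have h4 : HasDerivAt (fun w => mden γ w ^ (-(n + (m:ℤ) + (r:ℤ))))
          ((((-(n + (m:ℤ) + (r:ℤ))) : ℤ) : ℂ) * mden γ z ^ ((-(n + (m:ℤ) + (r:ℤ))) - 1) * γ.1 1 0) z :=
        (hasDerivAt_zpow (-(n + (m:ℤ) + (r:ℤ))) (mden γ z) (Or.inl hz)).comp z (hmden_d z)
      have hF : HasDerivAt (iteratedDeriv r f) (iteratedDeriv (r+1) f (mact γ z)) (mact γ z) := by
        rw [iteratedDeriv_succ]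
        exact ((hD r) (mact γ z)).hasDerivAt
      have h5 : HasDerivAt (fun w => iteratedDeriv r f (mact γ w))
          (iteratedDeriv (r+1) f (mact γ z) * mden γ z ^ (-2 : ℤ)) z :=
        hF.comp z (hmact z hz)
      exact (h4.const_mul (Acoef n (γ.1 1 0) m r)).mul h5
    rw [hder.deriv]
    rw [sum_step n (γ.1 1 0) (mden γ z) hz m (fun r => iteratedDeriv r f (mact γ z))]
    apply Finset.sum_congr rfl
    intro r _
    congr 2
    push_cast
    ring

theorem stmt12 (γ : Matrix.SpecialLinearGroup (Fin 2) ℂ) (f : ℂ → ℂ)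
    (hf : Differentiable ℂ f) (m : ℕ) (n : ℤ) (z : ℂ) (hz : mden γ z ≠ 0) :
    iteratedDeriv m (fun w => (mden γ w) ^ (-n) * f (mact γ w)) z =
      ∑ r ∈ Finset.range (m + 1),
        ((m.factorial : ℂ) / (r.factorial : ℂ)) *
          gchoose ((m : ℂ) + (n : ℂ) - 1) (m - r) *
          (-(γ.1 1 0)) ^ (m - r) *
          (mden γ z) ^ (-(n + (m : ℤ) + (r : ℤ))) *
          iteratedDeriv r f (mact γ z) := by
  exact main_formula γ f hf n m z hz
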